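/- Let θ̄ = (θ₁, …, θ_N) ∈ [0, 2π]^N with diameter d(θ̄) < π, and let L be a shortest closed arc containing all e^{iθ_j}. Suppose each jump map Ψ_i satisfies Assumption 1 and that the jump occurs only when some oscillator j₀ has θ_{j₀} ∈ {0, 2π} (so 1 ∈ L). Then the post-jump phases θ_i⁺ = Ψ_i^{k_i}(θ_i) mod 2π all satisfy e^{iθ_i⁺} ∈ L, and hence d(θ̄⁺) ≤ d(θ̄). -/
import Mathlib


open Real Set Function

/-- Shortest-arc diameter of a phase tuple. -/
noncomputable def phaseDiam {N : ℕ} (θ : Fin N → ℝ) : ℝ :=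
  sInf {l : ℝ | 0 ≤ l ∧ ∃ α : ℝ, ∀ j, ∃ φ ∈ Set.Icc α (α + l),
    Complex.exp (Complex.I * (θ j : ℂ)) = Complex.exp (Complex.I * (φ : ℂ))}

lemma exp_I_mul_eq_iff (x y : ℝ) :
    Complex.exp (Complex.I * x) = Complex.exp (Complex.I * y) ↔
      ∃ n : ℤ, x = y + n * (2 * π) := by
  rw [Complex.exp_eq_exp_iff_exists_int]
  constructor
  · rintro ⟨n, hn⟩
    refine ⟨n, ?_⟩
    have h2 : Complex.I * (x : ℂ) = Complex.I * ((y : ℂ) + (n : ℂ) * (2 * π)) := by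
      linear_combination hn
    have h3 := mul_left_cancel₀ Complex.I_ne_zero h2
    exact_mod_cast h3
  · rintro ⟨n, hn⟩
    refine ⟨n, ?_⟩
    rw [hn]
    push_cast
    ring

lemma phaseDiam_nonneg {N : ℕ} (θ : Fin N → ℝ)
    (hθ : ∀ i, θ i ∈ Set.Icc 0 (2 * π)) : 0 ≤ phaseDiam θ := by
  apply le_csInf
  · refine ⟨2 * π, by positivity, 0, fun j => ⟨θ j, by simpa using hθ j, rfl⟩⟩
  · rintro l ⟨hl, -⟩
    exact hl

/-- diameter monotonicity at jumps, statement 3 of Theorem 1: if all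
phases lie in a shortest closed arc `L` of length `d(θ̄) < π`, the jump occurs while some
oscillator `j₀` has phase `0` or `2π`, and every `Ψ_i` satisfies Assumption 1, then all
post-jump phases `θ_i⁺ = Ψ_i^{k_i}(θ_i) (mod 2π)` still lie (as circle points) in `L`,
whence `d(θ̄⁺) ≤ d(θ̄)`. -/
theorem diameter_nonincreasing_at_jump {N : ℕ} (θ : Fin N → ℝ)
    (hθ : ∀ i, θ i ∈ Set.Icc 0 (2 * π))
    (hd : phaseDiam θ < π)
    (α : ℝ) (L : Set ℂ)
    (hL : L = {z : ℂ | ∃ φ ∈ Set.Icc α (α + phaseDiam θ),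
      z = Complex.exp (Complex.I * (φ : ℂ))})
    (hθL : ∀ i, Complex.exp (Complex.I * (θ i : ℂ)) ∈ L)
    (Ψ : Fin N → ℝ → ℝ)
    (h0 : ∀ i, Ψ i 0 = 0) (h2π : ∀ i, Ψ i (2 * π) = 2 * π)
    (hlow : ∀ i, ∀ φ ∈ Set.Ioo 0 π, Ψ i φ ∈ Set.Ioo 0 φ)
    (hhigh : ∀ i, ∀ φ ∈ Set.Ioo π (2 * π), Ψ i φ ∈ Set.Ioo φ (2 * π))
    (j₀ : Fin N) (hj₀ : θ j₀ = 0 ∨ θ j₀ = 2 * π)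
    (k : Fin N → ℕ)
    (θp : Fin N → ℝ) (hθp : ∀ i, θp i = (Ψ i)^[k i] (θ i)) :
    (∀ i, Complex.exp (Complex.I * (θp i : ℂ)) ∈ L) ∧
    phaseDiam θp ≤ phaseDiam θ := by
  have hπ : 0 < π := Real.pi_pos
  set d := phaseDiam θ with hdd
  have hd0 : 0 ≤ d := phaseDiam_nonneg θ hθ
  -- extract the anchor point: 1 ∈ L
  obtain ⟨φ₀, hφ₀mem, hφ₀eq⟩ := by
    have := hθL j₀; rw [hL] at this; exact this
  -- θ j₀ = φ₀ + 2πn, and θ j₀ ∈ {0, 2π}, so φ₀ is a multiple of 2π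
  obtain ⟨n₀, hn₀⟩ := (exp_I_mul_eq_iff (θ j₀) φ₀).1 hφ₀eq
  obtain ⟨m, hm⟩ : ∃ m : ℤ, φ₀ = (m : ℝ) * (2 * π) := by
    rcases hj₀ with h | h
    · exact ⟨-n₀, by push_cast; linarith [hn₀, h.symm.trans rfl]⟩
    · exact ⟨1 - n₀, by push_cast; nlinarith [hn₀]⟩
  set a := α - φ₀ with ha
  set b := a + d with hb
  have haa : -d ≤ a := by
    have := hφ₀mem.2; simp only [ha]; linarith
  have hab : a ≤ 0 := by
    have := hφ₀mem.1; simp only [ha]; linarith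
  have hb0 : 0 ≤ b := by simp only [hb]; linarith
  have hbd : b ≤ d := by simp only [hb]; linarith
  -- the invariant set
  set S : Set ℝ := Set.Icc 0 b ∪ Set.Icc (2 * π + a) (2 * π) with hS
  -- each θ i lies in S
  have hθS : ∀ i, θ i ∈ S := by
    intro i
    obtain ⟨φ, hφmem, hφeq⟩ := by
      have := hθL i; rw [hL] at this; exact this
    obtain ⟨n, hn⟩ := (exp_I_mul_eq_iff (θ i) φ).1 hφeq
    have hy1 : α ≤ φ := hφmem.1
    have hy2 : φ ≤ α + d := hφmem.2
    -- φ - φ₀ ∈ [a, b] ⊆ (-π, π); θ i = (φ - φ₀) + 2π(n + m)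
    have hyl : -π < φ - φ₀ := by linarith
    have hyu : φ - φ₀ < π := by linarith
    have hθi := hθ i
    have hkey : θ i = (φ - φ₀) + ((n + m : ℤ) : ℝ) * (2 * π) := by
      push_cast; rw [hn, hm]; ring
    have hnm : (n + m : ℤ) = 0 ∨ (n + m : ℤ) = 1 := by
      have h1 : ((n + m : ℤ) : ℝ) * (2 * π) > -π := by
        have := hθi.1; linarith
      have h2 : ((n + m : ℤ) : ℝ) * (2 * π) < 3 * π := by
        have := hθi.2; linarith
      have hl : (-1 : ℝ) < ((n + m : ℤ) : ℝ) := by nlinarith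
      have hu : ((n + m : ℤ) : ℝ) < 2 := by nlinarith
      have hl' : (-1 : ℤ) < n + m := by exact_mod_cast hl
      have hu' : n + m < 2 := by exact_mod_cast hu
      omega
    rcases hnm with h | h
    · left
      rw [h] at hkey
      simp at hkey
      constructor
      · exact hθi.1
      · rw [hkey]; simp only [hb, ha]; linarith
    · right
      rw [h] at hkey
      simp at hkey
      constructor
      · rw [hkey]; simp only [ha]; linarith
      · exact hθi.2
  -- S is invariant under each Ψ i
  have hSinv : ∀ i, ∀ x ∈ S, Ψ i x ∈ S := by
    intro i x hx
    rcases hx with hx | hx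
    · rcases eq_or_lt_of_le hx.1 with h | h
      · left; rw [← h, h0 i]; exact ⟨le_refl 0, hb0⟩
      · have hxπ : x < π := lt_of_le_of_lt hx.2 (lt_of_le_of_lt hbd hd)
        have := hlow i x ⟨h, hxπ⟩
        left; exact ⟨le_of_lt this.1, le_trans (le_of_lt this.2) hx.2⟩
    · rcases eq_or_lt_of_le hx.2 with h | h
      · right; rw [h, h2π i]; exact ⟨by linarith, le_refl _⟩
      · have hxπ : π < x := by
          have : -π < a := lt_of_lt_of_le (by linarith) haa
          linarith [hx.1]
        have := hhigh i x ⟨hxπ, h⟩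
        right; exact ⟨le_trans hx.1 (le_of_lt this.1), le_of_lt this.2⟩
  -- iterates stay in S
  have hθpS : ∀ i, θp i ∈ S := by
    intro i
    rw [hθp i]
    induction k i with
    | zero => simpa using hθS i
    | succ n ih => rw [Function.iterate_succ_apply']; exact hSinv i _ ih
  -- membership in L for points of S
  have hSL : ∀ x ∈ S, Complex.exp (Complex.I * (x : ℂ)) ∈ L := by
    intro x hx
    rw [hL]
    rcases hx with hx | hx
    · refine ⟨x + φ₀, ⟨by simp only [ha] at *; linarith [hx.1],
        by have := hx.2; simp only [hb, ha] at this ⊢; linarith⟩, ?_⟩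
      rw [exp_I_mul_eq_iff]
      exact ⟨-m, by push_cast; rw [hm]; ring⟩
    · refine ⟨x - 2 * π + φ₀, ⟨by simp only [ha] at *; linarith [hx.1],
        by have := hx.2; have := hφ₀mem.2; linarith⟩, ?_⟩
      rw [exp_I_mul_eq_iff]
      exact ⟨1 - m, by push_cast; rw [hm]; ring⟩
  have hmain : ∀ i, Complex.exp (Complex.I * (θp i : ℂ)) ∈ L :=
    fun i => hSL _ (hθpS i)
  refine ⟨hmain, ?_⟩
  -- d is an admissible arc length for θp
  apply csInf_le
  · exact ⟨0, fun l hl => hl.1⟩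
  · refine ⟨hd0, α, fun j => ?_⟩
    have := hmain j
    rw [hL] at this
    obtain ⟨φ, hφ, hφeq⟩ := this
    exact ⟨φ, hφ, hφeq⟩
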